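/- For n ≥ 1 odd, the derivative of the Zagier polynomial satisfies d/dx B*_n(x) = 1/2 + sum_{j=1}^{floor(n/2)} 2j * B*_{2j}(x). -/

import Mathlib

open Finset Polynomial

/-- The Zagier polynomials, evaluated at a real number. -/
noncomputable def zagierBstarPoly (n : ℕ) (x : ℝ) : ℝ :=
  ∑ r ∈ Finset.range (n + 1),
    ((n + r).choose (2 * r) : ℝ) * (Polynomial.aeval x (Polynomial.bernoulli r)) / (n + r)

lemma chooseStep (n k : ℕ) : (n+1) * (n.choose k) = ((n+1).choose (k+1)) * (k+1) := by
  simpa [Nat.succ_eq_add_one] using Nat.add_one_mul_choose_eq n k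

lemma natstepR (K s : ℕ) :
    ((s:ℝ)+1) * ((2*K+s+2).choose (2*s+2)) * (2*(K:ℝ)+(s:ℝ)+4)
      + (2*(K:ℝ)+2) * ((2*K+s+2).choose (2*s)) * (2*(K:ℝ)+(s:ℝ)+4)
    = ((s:ℝ)+1) * ((2*K+s+4).choose (2*s+2)) * (2*(K:ℝ)+(s:ℝ)+2) := by
  rcases s with _ | u
  · have hA : (2*K+0+2).choose (2*0+2) = (K+1)*(2*K+1) := by
      rw [Nat.choose_two_right]
      rw [show 2*K+0+2-1 = 2*K+1 by omega]
      rw [show (2*K+0+2)*(2*K+1) = (K+1)*(2*K+1)*2 by ring]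
      exact Nat.mul_div_cancel _ (by norm_num)
    have hB : (2*K+0+4).choose (2*0+2) = (K+2)*(2*K+3) := by
      rw [Nat.choose_two_right]
      rw [show 2*K+0+4-1 = 2*K+3 by omega]
      rw [show (2*K+0+4)*(2*K+3) = (K+2)*(2*K+3)*2 by ring]
      exact Nat.mul_div_cancel _ (by norm_num)
    have hC : (2*K+0+2).choose (2*0) = 1 := Nat.choose_zero_right _
    rw [hA, hB, hC]
    push_cast
    ring
  · set s := u + 1 with hs
    have h1n : (2*K+s+4) * ((2*K+s+3).choose (2*s+1)) = ((2*K+s+4).choose (2*s+2)) * (2*s+2) := by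
      have h := chooseStep (2*K+s+3) (2*s+1)
      rw [show 2*K+s+3+1 = 2*K+s+4 by omega, show 2*s+1+1 = 2*s+2 by omega] at h
      exact h
    have h2n : (2*K+s+2) * ((2*K+s+1).choose (2*s+1)) = ((2*K+s+2).choose (2*s+2)) * (2*s+2) := by
      have h := chooseStep (2*K+s+1) (2*s+1)
      rw [show 2*K+s+1+1 = 2*K+s+2 by omega, show 2*s+1+1 = 2*s+2 by omega] at h
      exact h
    have h3n : (2*K+s+3).choose (2*s+1) = (2*K+s+2).choose (2*s) + (2*K+s+2).choose (2*s+1) := by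
      have h := Nat.choose_succ_succ (2*K+s+2) (2*s)
      simp only [Nat.succ_eq_add_one] at h
      rw [show 2*K+s+2+1 = 2*K+s+3 by omega, show 2*s+1 = 2*s+1 by rfl] at h
      exact h
    have h4n : (2*K+s+2).choose (2*s+1) = (2*K+s+1).choose (2*s) + (2*K+s+1).choose (2*s+1) := by
      exact Nat.choose_succ_succ (2*K+s+1) (2*s)
    have h5n : (2*K+s+2) * ((2*K+s+1).choose (2*u+1)) = ((2*K+s+2).choose (2*s)) * (2*s) := by
      have h := chooseStep (2*K+s+1) (2*u+1)
      rw [show 2*K+s+1+1 = 2*K+s+2 by omega, show 2*u+1+1 = 2*s by omega] at h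
      exact h
    have h6n : (2*K+s+2).choose (2*s) = (2*K+s+1).choose (2*u+1) + (2*K+s+1).choose (2*u+2) := by
      have h := Nat.choose_succ_succ (2*K+s+1) (2*u+1)
      simp only [Nat.succ_eq_add_one] at h
      rw [show 2*K+s+1+1 = 2*K+s+2 by omega, show 2*u+1+1 = 2*u+2 by omega] at h
      exact h
    rw [show 2*u+2 = 2*s by omega] at h6n
    have h1 : (2*(K:ℝ)+(s:ℝ)+4) * ((2*K+s+3).choose (2*s+1)) = ((2*K+s+4).choose (2*s+2)) * (2*(s:ℝ)+2) := by exact_mod_cast h1n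
    have h2 : (2*(K:ℝ)+(s:ℝ)+2) * ((2*K+s+1).choose (2*s+1)) = ((2*K+s+2).choose (2*s+2)) * (2*(s:ℝ)+2) := by exact_mod_cast h2n
    have h3 : ((2*K+s+3).choose (2*s+1) : ℝ) = (2*K+s+2).choose (2*s) + (2*K+s+2).choose (2*s+1) := by exact_mod_cast h3n
    have h4 : ((2*K+s+2).choose (2*s+1) : ℝ) = (2*K+s+1).choose (2*s) + (2*K+s+1).choose (2*s+1) := by exact_mod_cast h4n
    have h5 : (2*(K:ℝ)+(s:ℝ)+2) * ((2*K+s+1).choose (2*u+1)) = ((2*K+s+2).choose (2*s)) * (2*(s:ℝ)) := by exact_mod_cast h5n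
    have h6 : ((2*K+s+2).choose (2*s) : ℝ) = (2*K+s+1).choose (2*u+1) + (2*K+s+1).choose (2*s) := by exact_mod_cast h6n
    linear_combination (-(2*(K:ℝ)+(s:ℝ)+4)/2)*h2 + ((2*(K:ℝ)+(s:ℝ)+2)/2)*h1
      - ((2*(K:ℝ)+(s:ℝ)+2)*(2*(K:ℝ)+(s:ℝ)+4)/2)*(h3+h4) + ((2*(K:ℝ)+(s:ℝ)+4)/2)*h5
      + ((2*(K:ℝ)+(s:ℝ)+2)*(2*(K:ℝ)+(s:ℝ)+4)/2)*h6

lemma keylem (s K : ℕ) :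
    ((s:ℝ)+1) * (((2*K+s+2).choose (2*s+2)) : ℝ) / (2*(K:ℝ)+(s:ℝ)+2)
      = (if s = 0 then (1:ℝ)/2 else 0)
        + ∑ j ∈ Icc 1 K, (2*(j:ℝ)) * (((2*j+s).choose (2*s)) : ℝ) / (2*(j:ℝ)+(s:ℝ)) := by
  induction K with
  | zero =>
    rw [show Finset.Icc 1 0 = ∅ by rfl]
    rcases s with _ | u
    · norm_num
    · rw [Nat.choose_eq_zero_of_lt (by omega)]
      simp
  | succ K ih =>
    rw [Finset.sum_Icc_succ_top (by omega : 1 ≤ K+1), ← add_assoc, ← ih]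
    rw [show 2*(K+1)+s+2 = 2*K+s+4 by omega, show 2*(K+1)+s = 2*K+s+2 by omega]
    have hst := natstepR K s
    have d1 : (2*(K:ℝ)+(s:ℝ)+4) ≠ 0 := by positivity
    have d2 : (2*(K:ℝ)+(s:ℝ)+2) ≠ 0 := by positivity
    push_cast
    rw [show (2*((K:ℝ)+1)+(s:ℝ)+2) = 2*(K:ℝ)+(s:ℝ)+4 from by ring,
        show (2*((K:ℝ)+1)+(s:ℝ)) = 2*(K:ℝ)+(s:ℝ)+2 from by ring]
    rw [← add_div, div_eq_div_iff d1 d2]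
    linear_combination -hst

lemma zag_deriv (n : ℕ) (x : ℝ) :
    deriv (zagierBstarPoly n) x
      = ∑ s ∈ Finset.range n,
          (((s:ℝ)+1) * (((n+s+1).choose (2*s+2)) : ℝ) / ((n:ℝ)+(s:ℝ)+1)) * (aeval x (Polynomial.bernoulli s)) := by
  have hfun : zagierBstarPoly n = fun y : ℝ => ∑ r ∈ Finset.range (n+1),
      (((n+r).choose (2*r) : ℝ) / ((n:ℝ)+(r:ℝ))) * Polynomial.eval y ((Polynomial.bernoulli r).map (algebraMap ℚ ℝ)) := by
    funext y
    unfold zagierBstarPoly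
    refine Finset.sum_congr rfl fun r hr => ?_
    rw [aeval_def, ← eval_map]
    push_cast
    ring
  have hd : HasDerivAt (zagierBstarPoly n)
      (∑ r ∈ Finset.range (n+1),
        (((n+r).choose (2*r) : ℝ) / ((n:ℝ)+(r:ℝ))) * Polynomial.eval x (derivative ((Polynomial.bernoulli r).map (algebraMap ℚ ℝ)))) x := by
    rw [hfun]
    exact HasDerivAt.fun_sum fun r _ => (((Polynomial.bernoulli r).map (algebraMap ℚ ℝ)).hasDerivAt x).const_mul _
  rw [hd.deriv]
  have hterm : ∀ r : ℕ, (((n+r).choose (2*r) : ℝ) / ((n:ℝ)+(r:ℝ))) * Polynomial.eval x (derivative ((Polynomial.bernoulli r).map (algebraMap ℚ ℝ)))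
      = (((n+r).choose (2*r) : ℝ) / ((n:ℝ)+(r:ℝ))) * ((r:ℝ) * (aeval x (Polynomial.bernoulli (r-1)))) := by
    intro r
    rw [derivative_map, Polynomial.derivative_bernoulli, Polynomial.map_mul,
      Polynomial.map_natCast, eval_mul, eval_natCast, eval_map, ← aeval_def]
  simp only [hterm]
  rw [Finset.sum_range_succ']
  norm_num
  refine Finset.sum_congr rfl fun s hs => ?_
  rw [show n+(s+1) = n+s+1 by omega, show 2*(s+1) = 2*s+2 by omega]
  push_cast
  ring


theorem zagierBstarPoly_deriv_odd (n : ℕ) (hn : 1 ≤ n) (hno : Odd n) (x : ℝ) :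
    deriv (zagierBstarPoly n) x
      = 1 / 2 + ∑ j ∈ Finset.Icc 1 (n / 2), (2 * (j : ℝ)) * zagierBstarPoly (2 * j) x := by
  obtain ⟨K, hK⟩ := hno
  subst hK
  rw [show (2*K+1)/2 = K by omega, zag_deriv]
  have hz : ∀ j ∈ Finset.Icc 1 K, (2*(j:ℝ)) * zagierBstarPoly (2*j) x
      = ∑ r ∈ Finset.range (2*K+1),
          ((2*(j:ℝ)) * (((2*j+r).choose (2*r)) : ℝ) / (2*(j:ℝ)+(r:ℝ))) * (aeval x (Polynomial.bernoulli r)) := by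
    intro j hj
    have hj1 : 1 ≤ j := (Finset.mem_Icc.1 hj).1
    have hjK : j ≤ K := (Finset.mem_Icc.1 hj).2
    unfold zagierBstarPoly
    rw [Finset.mul_sum]
    rw [Finset.sum_subset (Finset.range_subset_range.2 (by omega : 2*j+1 ≤ 2*K+1))]
    · refine Finset.sum_congr rfl fun r hr => ?_
      push_cast
      ring
    · intro r hr hnr
      have hlt : 2*j+r < 2*r := by
        simp only [Finset.mem_range, not_lt] at hr hnr
        omega
      rw [Nat.choose_eq_zero_of_lt hlt]
      norm_num
  rw [Finset.sum_congr rfl hz, Finset.sum_comm]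
  have hswap : ∀ r ∈ Finset.range (2*K+1),
      ∑ j ∈ Finset.Icc 1 K, ((2*(j:ℝ)) * (((2*j+r).choose (2*r)) : ℝ) / (2*(j:ℝ)+(r:ℝ))) * (aeval x (Polynomial.bernoulli r))
      = (∑ j ∈ Finset.Icc 1 K, (2*(j:ℝ)) * (((2*j+r).choose (2*r)) : ℝ) / (2*(j:ℝ)+(r:ℝ))) * (aeval x (Polynomial.bernoulli r)) := by
    intro r _
    rw [Finset.sum_mul]
  rw [Finset.sum_congr rfl hswap]
  have hcoeff : ∀ s ∈ Finset.range (2*K+1),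
      (((s:ℝ)+1) * (((2*K+1+s+1).choose (2*s+2)) : ℝ) / (((2*K+1:ℕ):ℝ)+(s:ℝ)+1)) * (aeval x (Polynomial.bernoulli s))
      = ((if s = 0 then (1:ℝ)/2 else 0)
          + ∑ j ∈ Finset.Icc 1 K, (2*(j:ℝ)) * (((2*j+s).choose (2*s)) : ℝ) / (2*(j:ℝ)+(s:ℝ))) * (aeval x (Polynomial.bernoulli s)) := by
    intro s _
    rw [show 2*K+1+s+1 = 2*K+s+2 by omega,
      show (((2*K+1:ℕ):ℝ)+(s:ℝ)+1) = 2*(K:ℝ)+(s:ℝ)+2 by push_cast; ring, keylem s K]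
  rw [Finset.sum_congr rfl hcoeff]
  simp only [add_mul, ite_mul, zero_mul]
  rw [Finset.sum_add_distrib]
  congr 1
  rw [Finset.sum_eq_single 0]
  · simp [Polynomial.bernoulli_zero]
  · intro b _ hb
    simp [hb]
  · intro h
    exact absurd (Finset.mem_range.2 (by omega)) h
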